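/- Let G be a finite group of odd order, H ⊴ G, p a prime, P an abelian p-subgroup of H with P ⊴ G, q a prime distinct from p, and x ∈ H an element of order q with V = C_P(x) ≠ 1. Suppose every two elements of G of order pq are real conjugate in G. Then the centralizer C_G(x) acts transitively on the set Vx \ {x} = {vx : v ∈ V, v ≠ 1}, and this leads to a contradiction since |V| − 1 is even while |C_G(x)| is odd; hence not all elements of G of order pq are real conjugate in G. -/

import Mathlib

/-- Two elements are *real conjugate* if `g` or `g⁻¹` is conjugate to `h`. -/
def realConj {G : Type*} [Group G] (g h : G) : Prop := IsConj g h ∨ IsConj g⁻¹ h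

private lemma odd_of_dvd_nat {m n : ℕ} (h : Odd n) (hd : m ∣ n) : Odd m := by
  rcases Nat.even_or_odd m with he | ho
  · exact absurd ((even_iff_two_dvd.mp he).trans hd |> even_iff_two_dvd.mpr)
      (Nat.not_even_iff_odd.mpr h)
  · exact ho

/-- In a finite group of odd order, no element is conjugate to its inverse unless it equals it. -/
private lemma eq_inv_of_conj_inv {G : Type*} [Group G] [Finite G] (hodd : Odd (Nat.card G))
    {g x : G} (h : g * x * g⁻¹ = x⁻¹) : x = x⁻¹ := by
  have hinv : g * x⁻¹ * g⁻¹ = x := by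
    have := congrArg (·⁻¹) h
    simpa [mul_assoc] using this
  have h2 : Commute (g ^ 2) x := by
    have : g ^ 2 * x * (g ^ 2)⁻¹ = x := by
      have : g * (g * x * g⁻¹) * g⁻¹ = g * x⁻¹ * g⁻¹ := by rw [h]
      rw [hinv] at this
      calc g ^ 2 * x * (g ^ 2)⁻¹ = g * (g * x * g⁻¹) * g⁻¹ := by
            simp [pow_two, mul_inv_rev, mul_assoc]
        _ = x := this
    have := congrArg (· * g ^ 2) this
    exact (by simpa [mul_assoc] using this : g ^ 2 * x = x * g ^ 2)
  have hgodd : Odd (orderOf g) := odd_of_dvd_nat hodd (orderOf_dvd_natCard g)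
  obtain ⟨m, hm⟩ := hgodd
  have hgpow : (g ^ 2) ^ (m + 1) = g := by
    rw [← pow_mul]
    have : 2 * (m + 1) = orderOf g + 1 := by omega
    rw [this, pow_succ, pow_orderOf_eq_one, one_mul]
  have hgx : Commute g x := hgpow ▸ h2.pow_left (m + 1)
  have : x = x⁻¹ := by
    rw [← h, hgx.eq, mul_assoc, mul_inv_cancel, mul_one]
  exact this

theorem stmt5 {G : Type*} [Group G] [Finite G] (hodd : Odd (Nat.card G))
    (H : Subgroup G) [H.Normal] (p q : ℕ) (hp : p.Prime) (hq : q.Prime) (hpq : p ≠ q)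
    (P : Subgroup G) [P.Normal] (hPH : P ≤ H) (hPp : IsPGroup p P)
    (hPab : ∀ a ∈ P, ∀ b ∈ P, a * b = b * a)
    (x : G) (hxH : x ∈ H) (hxq : orderOf x = q)
    (hV : ∃ v ∈ P, v ≠ 1 ∧ Commute v x) :
    ¬ ∀ a b : G, orderOf a = p * q → orderOf b = p * q → realConj a b := by
  intro hall
  haveI := Fact.mk hp
  have hco : Nat.Coprime p q := (Nat.coprime_primes hp hq).mpr hpq
  have hqodd : Odd q := odd_of_dvd_nat hodd (hxq ▸ orderOf_dvd_natCard x)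
  obtain ⟨v, hvP, hv1, hvx⟩ := hV
  -- produce an element v₀ of order exactly p in P commuting with x
  obtain ⟨k, hk⟩ := hPp ⟨v, hvP⟩
  have hvpk : v ^ p ^ k = 1 := by
    have := congrArg (Subtype.val) hk
    simpa using this
  obtain ⟨j, hjk, hj⟩ := (Nat.dvd_prime_pow hp).mp (orderOf_dvd_of_pow_eq_one hvpk)
  have hj0 : j ≠ 0 := by
    intro h
    rw [h, pow_zero] at hj
    exact hv1 (orderOf_eq_one_iff.mp hj)
  set v₀ : G := v ^ p ^ (j - 1) with hv₀def
  have hv₀P : v₀ ∈ P := P.pow_mem hvP _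
  have hv₀x : Commute v₀ x := hvx.pow_left _
  have hv₀p : v₀ ^ p = 1 := by
    have hj1 : j - 1 + 1 = j := by omega
    rw [hv₀def, ← pow_mul, ← pow_succ, hj1, ← hj, pow_orderOf_eq_one]
  have hv₀1 : v₀ ≠ 1 := by
    intro h
    have : orderOf v ∣ p ^ (j - 1) := orderOf_dvd_of_pow_eq_one h
    rw [hj] at this
    have := (Nat.pow_dvd_pow_iff_le_right hp.one_lt).mp this
    omega
  have hv₀ord : orderOf v₀ = p := orderOf_eq_prime hv₀p hv₀1
  -- the subgroup W = Ω₁(C_P(x))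
  set W : Subgroup G := {
    carrier := {w | w ∈ P ∧ Commute w x ∧ w ^ p = 1}
    one_mem' := ⟨P.one_mem, Commute.one_left x, one_pow p⟩
    mul_mem' := fun {a b} ha hb => ⟨P.mul_mem ha.1 hb.1, ha.2.1.mul_left hb.2.1, by
      rw [Commute.mul_pow (hPab a ha.1 b hb.1), ha.2.2, hb.2.2, one_mul]⟩
    inv_mem' := fun {a} ha => ⟨P.inv_mem ha.1, ha.2.1.inv_left, by
      rw [inv_pow, ha.2.2, inv_one]⟩ } with hWdef
  have hmemW : ∀ w : G, w ∈ W ↔ w ∈ P ∧ Commute w x ∧ w ^ p = 1 := fun w => Iff.rfl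
  have hv₀W : v₀ ∈ W := ⟨hv₀P, hv₀x, hv₀p⟩
  -- an exponent extracting the q-part
  obtain ⟨m, -, hm⟩ := Nat.exists_mul_mod_eq_one_of_coprime hco hq.one_lt
  set s : ℕ := p * m with hsdef
  have helper : ∀ a b : G, Commute a b → a ^ p = 1 → orderOf b = q → (a * b) ^ s = b := by
    intro a b hc ha hb
    rw [hc.mul_pow, hsdef, pow_mul, ha, one_pow, one_mul, ← pow_mod_orderOf, hb, hm, pow_one]
  -- order of products
  have hord : ∀ w : G, w ∈ W → w ≠ 1 → orderOf (w * x) = p * q := by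
    intro w hw hw1
    have : orderOf w = p := orderOf_eq_prime hw.2.2 hw1
    rw [hw.2.1.orderOf_mul_eq_mul_orderOf_of_coprime (by rw [this, hxq]; exact hco), this, hxq]
  -- transitivity of the centralizer of x on W \ {1}
  have claim : ∀ w : G, w ∈ W → w ≠ 1 → ∃ g : G, g * x = x * g ∧ g * v₀ * g⁻¹ = w := by
    intro w hw hw1
    rcases hall (v₀ * x) (w * x) (hord v₀ hv₀W hv₀1) (hord w hw hw1) with hc | hc
    · obtain ⟨g, hg⟩ := isConj_iff.mp hc
      set φ := MulAut.conj g with hφdef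
      have hφ : φ (v₀ * x) = w * x := hg
      have h1 : (φ (v₀ * x)) ^ s = φ x := by
        rw [map_mul]
        refine helper _ _ (hv₀x.map φ.toMonoidHom) ?_ ?_
        · rw [← map_pow, hv₀p, map_one]
        · exact (orderOf_injective φ.toMonoidHom φ.injective x).trans hxq
      have h2 : (w * x) ^ s = x := helper w x hw.2.1 hw.2.2 hxq
      rw [hφ, h2] at h1
      have hgx : g * x * g⁻¹ = x := h1.symm
      have hgx' : g * x = x * g := by
        have := congrArg (· * g) hgx
        simpa [mul_assoc] using this
      refine ⟨g, hgx', ?_⟩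
      have : φ v₀ * φ x = w * x := by rw [← map_mul]; exact hφ
      rw [h1.symm] at this
      have := mul_right_cancel this
      simpa [hφdef, MulAut.conj_apply] using this
    · exfalso
      obtain ⟨g, hg⟩ := isConj_iff.mp hc
      have hinvprod : (v₀ * x)⁻¹ = v₀⁻¹ * x⁻¹ := by
        rw [mul_inv_rev, hv₀x.inv_inv.eq]
      rw [hinvprod] at hg
      set φ := MulAut.conj g with hφdef
      have hφ : φ (v₀⁻¹ * x⁻¹) = w * x := hg
      have h1 : (φ (v₀⁻¹ * x⁻¹)) ^ s = φ x⁻¹ := by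
        rw [map_mul]
        refine helper _ _ ((hv₀x.inv_inv).map φ.toMonoidHom) ?_ ?_
        · rw [← map_pow, inv_pow, hv₀p, inv_one, map_one]
        · exact (orderOf_injective φ.toMonoidHom φ.injective x⁻¹).trans
            (by rw [orderOf_inv, hxq])
      have h2 : (w * x) ^ s = x := helper w x hw.2.1 hw.2.2 hxq
      rw [hφ, h2] at h1
      have hconjinv : g * x⁻¹ * g⁻¹ = x := h1.symm
      have : g * x * g⁻¹ = x⁻¹ := by
        have := congrArg (·⁻¹) hconjinv
        simpa [mul_assoc] using this
      have hxinv : x = x⁻¹ := eq_inv_of_conj_inv hodd this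
      have : x ^ 2 = 1 := by
        have h' : x * x⁻¹ = 1 := mul_inv_cancel x
        rw [← hxinv] at h'
        rw [pow_two, h']
      have hq2 : q ∣ 2 := hxq ▸ orderOf_dvd_of_pow_eq_one this
      have : q = 2 := (Nat.prime_dvd_prime_iff_eq hq Nat.prime_two).mp hq2
      rw [this] at hqodd
      exact (Nat.not_odd_iff_even.mpr (by decide)) hqodd
  -- set up the conjugation action of the centralizer of x
  set Cc : Subgroup (ConjAct G) :=
    Subgroup.comap ConjAct.ofConjAct.toMonoidHom (Subgroup.centralizer {x}) with hCcdef
  have horbit : MulAction.orbit Cc v₀ = (W : Set G) \ {1} := by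
    ext w
    constructor
    · rintro ⟨⟨g, hgC⟩, rfl⟩
      set h : G := ConjAct.ofConjAct g with hhdef
      have hhx : Commute h x := by
        have := hgC
        rw [Subgroup.mem_comap] at this
        exact ((Subgroup.mem_centralizer_iff.mp this) x rfl).symm
      have hsmul : (⟨g, hgC⟩ : Cc) • v₀ = h * v₀ * h⁻¹ := by
        show g • v₀ = h * v₀ * h⁻¹
        rw [ConjAct.smul_def]
      show ((⟨g, hgC⟩ : Cc) • v₀) ∈ (W : Set G) \ {1}
      rw [hsmul]
      constructor
      · refine ⟨‹P.Normal›.conj_mem v₀ hv₀P h, ?_, ?_⟩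
        · have hcm : Commute ((MulAut.conj h) v₀) ((MulAut.conj h) x) :=
            hv₀x.map (MulAut.conj h).toMonoidHom
          have hx' : (MulAut.conj h) x = x := by
            simp only [MulAut.conj_apply]
            rw [hhx.eq, mul_assoc, mul_inv_cancel, mul_one]
          rw [hx'] at hcm
          simpa [MulAut.conj_apply] using hcm
        · have hmp := map_pow (MulAut.conj h).toMonoidHom v₀ p
          rw [hv₀p, map_one] at hmp
          simpa [MulAut.conj_apply] using hmp.symm
      · simp only [Set.mem_singleton_iff]
        intro hcon
        apply hv₀1
        have : h * v₀ * h⁻¹ = h * 1 * h⁻¹ := by rw [hcon]; group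
        exact mul_left_cancel (mul_right_cancel this)
    · rintro ⟨hwW, hw1⟩
      obtain ⟨g, hgx, hgv⟩ := claim w hwW (by simpa using hw1)
      have hgC : ConjAct.toConjAct g ∈ Cc := by
        rw [hCcdef, Subgroup.mem_comap]
        refine Subgroup.mem_centralizer_iff.mpr ?_
        rintro y rfl
        simpa using hgx.symm
      refine ⟨⟨ConjAct.toConjAct g, hgC⟩, ?_⟩
      show (ConjAct.toConjAct g) • v₀ = w
      rw [ConjAct.smul_def]
      simpa using hgv
  -- counting
  haveI := Fintype.ofFinite G
  haveI : Fintype (ConjAct G) := inferInstanceAs (Fintype G)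
  classical
  haveI : Fintype (MulAction.orbit Cc v₀) := Fintype.ofFinite _
  have hdvd : Nat.card (MulAction.orbit Cc v₀) ∣ Nat.card Cc := by
    have := MulAction.card_orbit_mul_card_stabilizer_eq_card_group Cc v₀
    rw [Nat.card_eq_fintype_card, Nat.card_eq_fintype_card]
    exact ⟨_, this.symm⟩
  have hCcodd : Odd (Nat.card Cc) :=
    odd_of_dvd_nat hodd (Subgroup.card_subgroup_dvd_card Cc)
  have hWodd : Odd (Nat.card W) :=
    odd_of_dvd_nat hodd (Subgroup.card_subgroup_dvd_card W)
  have hcard : Nat.card (MulAction.orbit Cc v₀) = Nat.card W - 1 := by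
    rw [horbit, Nat.card_coe_set_eq,
      Set.ncard_diff_singleton_of_mem (W.one_mem),
      ← Nat.card_coe_set_eq]
    rfl
  have heven : Even (Nat.card (MulAction.orbit Cc v₀)) := by
    rw [hcard]
    exact Nat.Odd.sub_odd hWodd odd_one
  have : (2 : ℕ) ∣ Nat.card Cc := (even_iff_two_dvd.mp heven).trans hdvd
  exact (Nat.not_even_iff_odd.mpr hCcodd) (even_iff_two_dvd.mpr this)
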